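/- For every complex number s with Re(s) ≥ 1, the logarithmic derivative of the Gamma function satisfies |Γ'(s)/Γ(s)| ≤ 11/3 + log(|s| + 1). -/

import Mathlib

open Complex Filter Topology Set

local notation "γ" => Real.eulerMascheroniConstant

noncomputable def psiC (s : ℂ) : ℂ := deriv Complex.Gamma s / Complex.Gamma s

noncomputable def dterm (s : ℂ) (n : ℕ) : ℂ := 1 / ((n : ℂ) + 1) - 1 / ((n : ℂ) + s)

noncomputable def rterm (x : ℝ) (n : ℕ) : ℝ := 1 / ((n : ℝ) + 1) - 1 / ((n : ℝ) + x)

noncomputable def FC (s : ℂ) : ℂ := -(γ : ℂ) + ∑' n, dterm s n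

def U : Set ℂ := {s | 0 < s.re}

lemma hU_open : IsOpen U := isOpen_lt continuous_const Complex.continuous_re

lemma mem_U_ne {s : ℂ} (hs : s ∈ U) (m : ℕ) : s ≠ -m := by
  intro h
  have : s.re = -(m : ℝ) := by rw [h]; simp
  have := hs
  simp only [U, mem_setOf_eq] at this
  rw [‹s.re = -(m:ℝ)›] at this
  have : (0:ℝ) ≤ m := by positivity
  linarith

lemma Gamma_diff {s : ℂ} (hs : s ∈ U) : DifferentiableAt ℂ Complex.Gamma s :=
  Complex.differentiableAt_Gamma s (mem_U_ne hs)

lemma Gamma_ne {s : ℂ} (hs : s ∈ U) : Complex.Gamma s ≠ 0 :=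
  Complex.Gamma_ne_zero (mem_U_ne hs)

lemma add_nat_ne {s : ℂ} (hs : s ∈ U) (n : ℕ) : (n : ℂ) + s ≠ 0 := by
  intro h
  have : ((n : ℂ) + s).re = 0 := by rw [h]; simp
  simp only [Complex.add_re, Complex.natCast_re] at this
  have hn : (0:ℝ) ≤ n := by positivity
  have := hs
  simp only [U, mem_setOf_eq] at this
  linarith [‹(n:ℝ) + s.re = 0›]

lemma dterm_eq {s : ℂ} (hs : s ∈ U) (n : ℕ) :
    dterm s n = (s - 1) / (((n : ℂ) + 1) * ((n : ℂ) + s)) := by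
  have h1 : ((n : ℂ) + 1) ≠ 0 := Nat.cast_add_one_ne_zero n
  have h2 := add_nat_ne hs n
  field_simp [dterm]
  unfold dterm
  field_simp
  ring

lemma norm_add_nat_ge {s : ℂ} (n : ℕ) : (n : ℝ) + s.re ≤ ‖(n : ℂ) + s‖ := by
  have := Complex.re_le_norm ((n : ℂ) + s)
  simpa using this

lemma dterm_norm {s : ℂ} (hs : s ∈ U) (n : ℕ) :
    ‖dterm s n‖ = ‖s - 1‖ / (((n : ℝ) + 1) * ‖(n : ℂ) + s‖) := by
  rw [dterm_eq hs n, norm_div, norm_mul]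
  congr 2
  rw [show ((n : ℂ) + 1) = ((n + 1 : ℕ) : ℂ) by push_cast; ring, Complex.norm_natCast]
  push_cast; ring

lemma summable_sq : Summable (fun n : ℕ => 1 / ((n : ℝ) + 1) ^ 2) := by
  have h := Real.summable_one_div_nat_pow.mpr (by norm_num : 1 < 2)
  have := (summable_nat_add_iff 1).mpr h
  refine this.congr fun n => ?_
  push_cast
  ring

lemma dterm_bound {s : ℂ} {δ R : ℝ} (hδ : 0 < δ) (hδ1 : δ ≤ 1) (hre : δ ≤ s.re)
    (hR : ‖s‖ ≤ R) (n : ℕ) :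
    ‖dterm s n‖ ≤ (R + 1) / δ * (1 / ((n : ℝ) + 1) ^ 2) := by
  have hsU : s ∈ U := by
    simp only [U, mem_setOf_eq]; linarith
  have h1 : (0:ℝ) < (n:ℝ) + 1 := by positivity
  have hn0 : (0:ℝ) ≤ (n:ℝ) := n.cast_nonneg
  have h2 : δ * ((n:ℝ)+1) ≤ ‖(n:ℂ) + s‖ := by
    have h3 := norm_add_nat_ge (s := s) n
    nlinarith
  have h3 : ‖s - 1‖ ≤ R + 1 := by
    refine (norm_sub_le s 1).trans ?_
    simp only [norm_one]
    linarith
  rw [dterm_norm hsU]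
  have hR1 : (0:ℝ) ≤ R + 1 := le_trans (norm_nonneg _) h3
  calc ‖s - 1‖ / (((n:ℝ)+1) * ‖(n:ℂ) + s‖) ≤ (R+1) / (((n:ℝ)+1) * (δ * ((n:ℝ)+1))) := by
        refine div_le_div₀ hR1 h3 (by positivity) ?_
        exact mul_le_mul_of_nonneg_left h2 h1.le
    _ = (R + 1) / δ * (1 / ((n : ℝ) + 1) ^ 2) := by
        rw [div_mul_div_comm]
        rw [div_eq_div_iff (by positivity) (by positivity)]
        ring

lemma summable_dterm {s : ℂ} (hs : s ∈ U) : Summable (fun n => dterm s n) := by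
  have hs' : 0 < s.re := hs
  refine Summable.of_norm_bounded (summable_sq.mul_left ((‖s‖+1) / min s.re 1)) fun n => ?_
  exact dterm_bound (lt_min hs' one_pos) (min_le_right _ _) (min_le_left _ _) le_rfl n

lemma dterm_diffOn (n : ℕ) : DifferentiableOn ℂ (fun s => dterm s n) U := by
  refine (differentiableOn_const _).sub ?_
  exact (differentiableOn_const 1).div ((differentiableOn_const _).add differentiableOn_id)
    (fun x hx => add_nat_ne hx n)

lemma tsum_diff : DifferentiableOn ℂ (fun s => ∑' n, dterm s n) U := by
  have key : TendstoLocallyUniformlyOn (fun (t : Finset ℕ) s => ∑ n ∈ t, dterm s n)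
      (fun s => ∑' n, dterm s n) atTop U := by
    rw [tendstoLocallyUniformlyOn_iff_forall_isCompact hU_open]
    intro K hK hKc
    rcases K.eq_empty_or_nonempty with rfl | hne
    · simp [tendstoUniformlyOn_empty]
    obtain ⟨s₀, hs₀K, hmin⟩ := hKc.exists_isMinOn hne Complex.continuous_re.continuousOn
    obtain ⟨R, hR⟩ := hKc.exists_bound_of_continuousOn continuousOn_id
    have hs₀ : 0 < s₀.re := hK hs₀K
    refine tendstoUniformlyOn_tsum (summable_sq.mul_left ((R+1) / min s₀.re 1)) ?_
    intro n x hx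
    exact dterm_bound (lt_min hs₀ one_pos) (min_le_right _ _)
      (le_trans (min_le_left _ _) (hmin hx)) (hR x hx) n
  exact key.differentiableOn
    (Filter.Eventually.of_forall fun t => DifferentiableOn.fun_sum fun n _ => dterm_diffOn n)
    hU_open

lemma FC_analytic : AnalyticOnNhd ℂ FC U := by
  have : DifferentiableOn ℂ FC U := (differentiableOn_const _).add tsum_diff
  exact this.analyticOnNhd hU_open

lemma psiC_analytic : AnalyticOnNhd ℂ psiC U := by
  have hGd : DifferentiableOn ℂ Complex.Gamma U :=
    fun s hs => (Gamma_diff hs).differentiableWithinAt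
  have hG : AnalyticOnNhd ℂ Complex.Gamma U := hGd.analyticOnNhd hU_open
  exact hG.deriv.div hG fun s hs => Gamma_ne hs

lemma psiC_add_one {s : ℂ} (hs : s ∈ U) : psiC (s + 1) = psiC s + 1 / s := by
  have hs' : 0 < s.re := hs
  have hs0 : s ≠ 0 := by
    intro h; rw [h] at hs'; simp at hs'
  have hG := Gamma_diff hs
  have hne := Gamma_ne hs
  have hd : deriv Complex.Gamma (s + 1) = Complex.Gamma s + s * deriv Complex.Gamma s := by
    have hev : (fun z => Complex.Gamma (z + 1)) =ᶠ[𝓝 s] fun z => z * Complex.Gamma z := by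
      filter_upwards [IsOpen.mem_nhds isOpen_ne hs0] with z hz
      exact Complex.Gamma_add_one z hz
    have h1 : deriv (fun z => Complex.Gamma (z + 1)) s = deriv Complex.Gamma (s + 1) :=
      deriv_comp_add_const _ _ _
    have h2 : deriv (fun z => z * Complex.Gamma z) s
        = Complex.Gamma s + s * deriv Complex.Gamma s := by
      rw [deriv_fun_mul differentiableAt_fun_id hG, deriv_id'']
      ring
    rw [← h1, hev.deriv_eq, h2]
  have hΓ1 : Complex.Gamma (s + 1) = s * Complex.Gamma s := Complex.Gamma_add_one s hs0
  unfold psiC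
  rw [hd, hΓ1]
  field_simp
  ring

lemma psiC_shift {s : ℂ} (hs : s ∈ U) (n : ℕ) :
    psiC (s + n) = psiC s + ∑ k ∈ Finset.range n, 1 / (s + k) := by
  induction n with
  | zero => simp
  | succ n ih =>
    have hsn : s + n ∈ U := by
      have hs' : 0 < s.re := hs
      have : (0:ℝ) ≤ n := n.cast_nonneg
      simp only [U, mem_setOf_eq, Complex.add_re, Complex.natCast_re]
      linarith
    have h1 : s + (n + 1 : ℕ) = (s + n) + 1 := by push_cast; ring
    rw [h1, psiC_add_one hsn, ih, Finset.sum_range_succ]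
    ring

lemma psiC_nat (n : ℕ) : psiC ((n : ℂ) + 1) = -(γ : ℂ) + (harmonic n : ℂ) := by
  have h0 : ((n.factorial : ℕ) : ℂ) ≠ 0 := by
    exact_mod_cast n.factorial_ne_zero
  unfold psiC
  rw [Complex.deriv_Gamma_nat n, Complex.Gamma_nat_eq_factorial n]
  field_simp

lemma deriv_Gamma_ofReal {x : ℝ} (hx : 0 < x) :
    deriv Complex.Gamma (x : ℂ) = ((deriv Real.Gamma x : ℝ) : ℂ) := by
  have hxU : (x : ℂ) ∈ U := by
    simp only [U, mem_setOf_eq, Complex.ofReal_re]; exact hx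
  have hf : DifferentiableAt ℂ Complex.Gamma (x : ℂ) := Gamma_diff hxU
  have hxm : ∀ m : ℕ, x ≠ -m := by
    intro m h
    have : (0:ℝ) ≤ m := m.cast_nonneg
    rw [h] at hx; linarith
  have hg : HasDerivAt Real.Gamma (deriv Real.Gamma x) x :=
    (Real.differentiableAt_Gamma hxm).hasDerivAt
  have h1 : HasDerivAt (fun y : ℝ => Complex.Gamma ↑y) (deriv Complex.Gamma ↑x) x :=
    hf.hasDerivAt.comp_ofReal
  have h2 : HasDerivAt (fun y : ℝ => ((Real.Gamma y : ℝ) : ℂ)) (↑(deriv Real.Gamma x)) x :=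
    hg.ofReal_comp
  have h3 : HasDerivAt (fun y : ℝ => Complex.Gamma ↑y) (↑(deriv Real.Gamma x)) x := by
    refine h2.congr_of_eventuallyEq (Filter.Eventually.of_forall fun y => ?_)
    exact Complex.Gamma_ofReal y
  exact h1.unique h3

lemma psiC_ofReal {x : ℝ} (hx : 0 < x) :
    psiC (x : ℂ) = ((deriv Real.Gamma x / Real.Gamma x : ℝ) : ℂ) := by
  unfold psiC
  rw [deriv_Gamma_ofReal hx, Complex.Gamma_ofReal, ← Complex.ofReal_div]

lemma real_ne_neg_nat {x : ℝ} (hx : 0 < x) : ∀ m : ℕ, x ≠ -m := by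
  intro m h
  have : (0:ℝ) ≤ m := m.cast_nonneg
  rw [h] at hx; linarith

lemma psiR_mono : MonotoneOn (fun x => deriv Real.Gamma x / Real.Gamma x) (Ioi (0:ℝ)) := by
  have hconv := Real.convexOn_log_Gamma
  have hdiff : ∀ y ∈ Ioi (0:ℝ), DifferentiableAt ℝ (Real.log ∘ Real.Gamma) y := by
    intro y hy
    have h1 : DifferentiableAt ℝ Real.Gamma y := Real.differentiableAt_Gamma (real_ne_neg_nat hy)
    have h2 : Real.Gamma y ≠ 0 := (Real.Gamma_pos_of_pos hy).ne'
    simpa [Function.comp_def] using h1.log h2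
  have hmono := hconv.monotoneOn_deriv hdiff
  have hEq : ∀ y ∈ Ioi (0:ℝ),
      deriv (Real.log ∘ Real.Gamma) y = deriv Real.Gamma y / Real.Gamma y := by
    intro y hy
    have h1 : DifferentiableAt ℝ Real.Gamma y := Real.differentiableAt_Gamma (real_ne_neg_nat hy)
    have h2 : Real.Gamma y ≠ 0 := (Real.Gamma_pos_of_pos hy).ne'
    simpa [Function.comp_def] using deriv.log h1 h2
  intro a ha b hb hab
  have := hmono ha hb hab
  rwa [hEq a ha, hEq b hb] at this

lemma rterm_eq {x : ℝ} (hx : 1 ≤ x) (n : ℕ) :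
    rterm x n = (x - 1) / (((n:ℝ) + 1) * ((n:ℝ) + x)) := by
  have h1 : (0:ℝ) < (n:ℝ) + 1 := by positivity
  have h2 : (0:ℝ) < (n:ℝ) + x := by
    have := (Nat.cast_nonneg n : (0:ℝ) ≤ n); linarith
  unfold rterm
  field_simp
  ring

lemma summable_rterm {x : ℝ} (hx : 1 ≤ x) : Summable (rterm x) := by
  refine Summable.of_nonneg_of_le (fun n => ?_) (fun n => ?_)
    (summable_sq.mul_left (x - 1))
  · rw [rterm_eq hx n]
    have h1 : (0:ℝ) < (n:ℝ) + 1 := by positivity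
    have h2 : (0:ℝ) < (n:ℝ) + x := by have := (Nat.cast_nonneg n : (0:ℝ) ≤ n); linarith
    have : (0:ℝ) ≤ x - 1 := by linarith
    positivity
  · rw [rterm_eq hx n, mul_one_div]
    have h1 : (0:ℝ) < (n:ℝ) + 1 := by positivity
    have h2 : ((n:ℝ) + 1) * ((n:ℝ) + 1) ≤ ((n:ℝ) + 1) * ((n:ℝ) + x) := by nlinarith
    refine div_le_div₀ (by linarith) le_rfl (by positivity) ?_
    calc ((n:ℝ)+1)^2 = ((n:ℝ)+1) * ((n:ℝ)+1) := sq ((n:ℝ)+1)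
      _ ≤ _ := h2

lemma harmonic_cast (n : ℕ) : ((harmonic n : ℚ) : ℝ) = ∑ i ∈ Finset.range n, 1 / ((i:ℝ) + 1) := by
  rw [harmonic]
  push_cast
  refine Finset.sum_congr rfl fun i _ => ?_
  rw [one_div]

lemma psiR_squeeze {x : ℝ} (h1 : 1 ≤ x) (h2 : x ≤ 2) :
    deriv Real.Gamma x / Real.Gamma x = -γ + ∑' n, rterm x n := by
  set ψR := fun y => deriv Real.Gamma y / Real.Gamma y with hψR
  have hx0 : (0:ℝ) < x := by linarith
  have hxU : (x : ℂ) ∈ U := by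
    simp only [U, mem_setOf_eq, Complex.ofReal_re]; exact hx0
  -- real shift identity
  have hshiftR : ∀ n : ℕ, ψR (x + n) = ψR x + ∑ k ∈ Finset.range n, 1 / (x + (k:ℝ)) := by
    intro n
    have hshift := psiC_shift hxU n
    have hL : psiC ((x:ℂ) + (n:ℂ)) = ((ψR (x + n) : ℝ) : ℂ) := by
      rw [show ((x:ℂ) + (n:ℂ)) = ((x + (n:ℝ) : ℝ) : ℂ) by push_cast; ring]
      exact psiC_ofReal (by have := (Nat.cast_nonneg n : (0:ℝ) ≤ n); linarith)
    have hR0 : psiC (x:ℂ) = ((ψR x : ℝ) : ℂ) := psiC_ofReal hx0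
    have hsum : (∑ k ∈ Finset.range n, 1 / ((x:ℂ) + (k:ℂ)))
        = ((∑ k ∈ Finset.range n, 1 / (x + (k:ℝ)) : ℝ) : ℂ) := by
      rw [Complex.ofReal_sum]
      refine Finset.sum_congr rfl fun k _ => ?_
      push_cast
      ring
    rw [hL, hR0, hsum, ← Complex.ofReal_add] at hshift
    exact_mod_cast hshift
  -- value at integers
  have hnatR : ∀ n : ℕ, ψR ((n:ℝ) + 1) = -γ + ((harmonic n : ℚ) : ℝ) := by
    intro n
    have h := psiC_nat n
    have hL : psiC ((n:ℂ) + 1) = ((ψR ((n:ℝ) + 1) : ℝ) : ℂ) := by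
      rw [show ((n:ℂ) + 1) = (((n:ℝ) + 1 : ℝ) : ℂ) by push_cast; ring]
      exact psiC_ofReal (by have := (Nat.cast_nonneg n : (0:ℝ) ≤ n); linarith)
    rw [hL] at h
    have : ((ψR ((n:ℝ) + 1) : ℝ) : ℂ) = ((- γ + ((harmonic n : ℚ) : ℝ) : ℝ) : ℂ) := by
      rw [h]; push_cast; ring
    exact_mod_cast this
  -- monotonicity bounds
  have hm := psiR_mono
  have bounds : ∀ n : ℕ,
      -γ + (∑ i ∈ Finset.range n, rterm x i) ≤ ψR x ∧
      ψR x ≤ -γ + (∑ i ∈ Finset.range n, rterm x i) + 1 / ((n:ℝ) + 1) := by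
    intro n
    have hn0 : (0:ℝ) ≤ n := n.cast_nonneg
    have hmem1 : ((n:ℝ) + 1) ∈ Ioi (0:ℝ) := by simp; linarith
    have hmem2 : (x + (n:ℝ)) ∈ Ioi (0:ℝ) := by simp; linarith
    have hmem3 : ((n:ℝ) + 2) ∈ Ioi (0:ℝ) := by simp; linarith
    have hlow : ψR ((n:ℝ) + 1) ≤ ψR (x + n) := hm hmem1 hmem2 (by linarith)
    have hhigh : ψR (x + n) ≤ ψR ((n:ℝ) + 2) := hm hmem2 hmem3 (by linarith)
    have hs := hshiftR n
    have hsum_eq : ((harmonic n : ℚ) : ℝ) - (∑ k ∈ Finset.range n, 1 / (x + (k:ℝ)))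
        = ∑ i ∈ Finset.range n, rterm x i := by
      rw [harmonic_cast, ← Finset.sum_sub_distrib]
      refine Finset.sum_congr rfl fun i _ => ?_
      unfold rterm
      rw [add_comm (i:ℝ) x]
    constructor
    · have := hnatR n
      nlinarith [hlow, hs, hsum_eq]
    · have hn2 : ψR ((n:ℝ) + 2) = -γ + ((harmonic (n+1) : ℚ) : ℝ) := by
        have := hnatR (n + 1)
        rw [show ((n+1 : ℕ):ℝ) + 1 = (n:ℝ) + 2 by push_cast; ring] at this
        exact this
      have hh1 : ((harmonic (n+1) : ℚ) : ℝ) = ((harmonic n : ℚ) : ℝ) + 1 / ((n:ℝ) + 1) := by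
        rw [harmonic_cast, harmonic_cast, Finset.sum_range_succ]
      nlinarith [hhigh, hs, hsum_eq]
  -- limits
  have hsummable := summable_rterm h1
  have hT := hsummable.hasSum.tendsto_sum_nat
  have hlow : -γ + ∑' n, rterm x n ≤ ψR x := by
    refine le_of_tendsto' (tendsto_const_nhds.add hT) fun n => (bounds n).1
  have hhigh : ψR x ≤ -γ + ∑' n, rterm x n := by
    have htend : Filter.Tendsto
        (fun n : ℕ => -γ + (∑ i ∈ Finset.range n, rterm x i) + 1 / ((n:ℝ) + 1))
        Filter.atTop (𝓝 (-γ + ∑' n, rterm x n)) := by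
      have := ((tendsto_const_nhds (x := -γ) (f := Filter.atTop (α := ℕ))).add hT).add
        tendsto_one_div_add_atTop_nhds_zero_nat
      simpa using this
    exact ge_of_tendsto' htend fun n => (bounds n).2
  linarith

lemma squeeze {x : ℝ} (h1 : 1 ≤ x) (h2 : x ≤ 2) : psiC (x : ℂ) = FC (x : ℂ) := by
  have hx0 : (0:ℝ) < x := by linarith
  rw [psiC_ofReal hx0, psiR_squeeze h1 h2]
  unfold FC
  have : ∑' n, dterm (x:ℂ) n = (((∑' n, rterm x n : ℝ)) : ℂ) := by
    rw [Complex.ofReal_tsum]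
    refine tsum_congr fun n => ?_
    unfold dterm rterm
    push_cast
    ring
  rw [this]
  push_cast
  ring

lemma psiC_eq_FC {s : ℂ} (hs : s ∈ U) : psiC s = FC s := by
  have hpre : IsPreconnected U := (convex_halfSpace_re_gt 0).isPreconnected
  set z₀ : ℂ := ((3/2 : ℝ) : ℂ) with hz₀def
  have hz₀ : z₀ ∈ U := by
    simp only [U, mem_setOf_eq, hz₀def, Complex.ofReal_re]
    norm_num
  set z : ℕ → ℂ := fun n => ((3/2 + 1/((n:ℝ)+2) : ℝ) : ℂ) with hzdef
  have hrtend : Filter.Tendsto (fun n : ℕ => 3/2 + 1/((n:ℝ)+2)) Filter.atTop (𝓝 (3/2)) := by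
    have h0 : Filter.Tendsto (fun n : ℕ => 1/((n:ℝ)+2)) Filter.atTop (𝓝 0) := by
      have := (tendsto_one_div_add_atTop_nhds_zero_nat (𝕜 := ℝ)).comp
        (Filter.tendsto_add_atTop_nat 1)
      refine this.congr fun n => ?_
      simp only [Function.comp_apply]
      push_cast
      ring_nf
    simpa using (tendsto_const_nhds (x := (3/2:ℝ)) (f := Filter.atTop (α := ℕ))).add h0
  have htend : Filter.Tendsto z Filter.atTop (𝓝 z₀) := by
    rw [hzdef, hz₀def]
    exact (Complex.continuous_ofReal.tendsto _).comp hrtend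
  have hne : ∀ n, z n ≠ z₀ := by
    intro n h
    rw [hzdef, hz₀def] at h
    have h' : 3/2 + 1/((n:ℝ)+2) = 3/2 := by
      have := Complex.ofReal_inj.mp h
      exact this
    have : (0:ℝ) < 1/((n:ℝ)+2) := by positivity
    linarith
  have htendW : Filter.Tendsto z Filter.atTop (𝓝[≠] z₀) :=
    tendsto_nhdsWithin_of_tendsto_nhds_of_eventually_within z htend
      (Filter.Eventually.of_forall fun n => hne n)
  have hfreq : ∃ᶠ w in 𝓝[≠] z₀, psiC w = FC w := by
    refine htendW.frequently (Filter.Frequently.of_forall fun n => ?_)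
    have hb1 : (1:ℝ) ≤ 3/2 + 1/((n:ℝ)+2) := by
      have : (0:ℝ) < 1/((n:ℝ)+2) := by positivity
      linarith
    have hb2 : 3/2 + 1/((n:ℝ)+2) ≤ 2 := by
      have h3 : (0:ℝ) < (n:ℝ)+2 := by positivity
      have : 1/((n:ℝ)+2) ≤ 1/2 := by
        apply one_div_le_one_div_of_le <;> [norm_num; linarith [(Nat.cast_nonneg n : (0:ℝ) ≤ n)]]
      linarith
    exact squeeze hb1 hb2
  exact psiC_analytic.eqOn_of_preconnected_of_frequently_eq FC_analytic hpre hz₀ hfreq hs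

lemma norm_sub_one_le_norm_add_nat {s : ℂ} (hs : 1 ≤ s.re) (n : ℕ) :
    ‖s - 1‖ ≤ ‖(n : ℂ) + s‖ := by
  rw [Complex.norm_def, Complex.norm_def]
  apply Real.sqrt_le_sqrt
  rw [Complex.normSq_apply, Complex.normSq_apply]
  simp only [Complex.sub_re, Complex.sub_im, Complex.one_re, Complex.one_im,
    Complex.add_re, Complex.add_im, Complex.natCast_re, Complex.natCast_im]
  have hn : (0:ℝ) ≤ n := Nat.cast_nonneg n
  nlinarith

lemma telescope_hasSum {N : ℕ} (hN : 1 ≤ N) :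
    HasSum (fun n : ℕ => 1/((n:ℝ) + N) - 1/((n:ℝ) + N + 1)) (1 / (N:ℝ)) := by
  have hNpos : (0:ℝ) < N := by exact_mod_cast hN
  rw [hasSum_iff_tendsto_nat_of_nonneg]
  · have hps : ∀ n : ℕ, (∑ i ∈ Finset.range n, (1/((i:ℝ) + N) - 1/((i:ℝ) + N + 1)))
        = 1/(N:ℝ) - 1/((n:ℝ) + N) := by
      intro n
      induction n with
      | zero => simp
      | succ m ih =>
        rw [Finset.sum_range_succ, ih]
        have h1 : (0:ℝ) < (m:ℝ) + N := by positivity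
        push_cast
        ring
    simp only [hps]
    have h0 : Filter.Tendsto (fun n : ℕ => 1/((n:ℝ) + N)) Filter.atTop (𝓝 0) := by
      have h1 : Filter.Tendsto (fun n : ℕ => (n:ℝ) + N) Filter.atTop Filter.atTop :=
        Filter.tendsto_atTop_add_const_right _ _ tendsto_natCast_atTop_atTop
      simpa [one_div, Pi.inv_def] using h1.inv_tendsto_atTop
    have := (tendsto_const_nhds (x := 1/(N:ℝ)) (f := Filter.atTop (α := ℕ))).sub h0
    simpa using this
  · intro i
    have h1 : (0:ℝ) < (i:ℝ) + N := by positivity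
    have h2 : (0:ℝ) < (i:ℝ) + N + 1 := by positivity
    rw [sub_nonneg]
    apply one_div_le_one_div_of_le h1
    linarith

set_option maxHeartbeats 1000000 in
theorem abs_digamma_le (s : ℂ) (hs : 1 ≤ s.re) :
    ‖deriv Complex.Gamma s / Complex.Gamma s‖ ≤
      11 / 3 + Real.log (‖s‖ + 1) := by
  have hsU : s ∈ U := by
    simp only [U, mem_setOf_eq]; linarith
  have hgoal : ‖deriv Complex.Gamma s / Complex.Gamma s‖ = ‖psiC s‖ :=
    rfl
  rw [hgoal, psiC_eq_FC hsU]
  set r := ‖s - 1‖ with hr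
  have hr0 : 0 ≤ r := norm_nonneg _
  set N := ⌊r⌋₊ + 1 with hN
  have hN1 : 1 ≤ N := Nat.le_add_left 1 _
  have hNpos : (0:ℝ) < N := by exact_mod_cast hN1
  have hrN : r ≤ (N:ℝ) := by
    rw [hN]
    push_cast
    exact (Nat.lt_floor_add_one r).le
  have hNr : (N:ℝ) ≤ r + 1 := by
    rw [hN]
    push_cast
    have := Nat.floor_le hr0
    linarith
  -- termwise bounds
  have b1 : ∀ n : ℕ, ‖dterm s n‖ ≤ 1/((n:ℝ)+1) := by
    intro n
    rw [dterm_norm hsU]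
    have hA : (0:ℝ) < ‖(n:ℂ) + s‖ := by
      rw [norm_pos_iff]
      exact add_nat_ne hsU n
    have h1 : (0:ℝ) < (n:ℝ) + 1 := by positivity
    have hle := norm_sub_one_le_norm_add_nat hs n
    rw [div_le_div_iff₀ (by positivity) h1]
    nlinarith
  have b2 : ∀ n : ℕ, ‖dterm s n‖ ≤ r * (1/((n:ℝ)+1)^2) := by
    intro n
    rw [dterm_norm hsU, ← hr, mul_one_div]
    have h1 : (0:ℝ) < (n:ℝ) + 1 := by positivity
    have hA : (0:ℝ) < ‖(n:ℂ) + s‖ := by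
      rw [norm_pos_iff]; exact add_nat_ne hsU n
    have hge : (n:ℝ) + 1 ≤ ‖(n:ℂ) + s‖ := by
      have := norm_add_nat_ge (s := s) n
      linarith
    rw [div_le_div_iff₀ (by positivity) (by positivity)]
    have hkey : r * (((n:ℝ)+1)*((n:ℝ)+1)) ≤ r * (((n:ℝ)+1)*‖(n:ℂ)+s‖) :=
      mul_le_mul_of_nonneg_left (by nlinarith) hr0
    nlinarith [hkey]
  -- summability of norms
  have hsummable : Summable (fun n => ‖dterm s n‖) :=
    Summable.of_nonneg_of_le (fun n => norm_nonneg _) b2 (summable_sq.mul_left r)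
  -- split the sum
  have hsplit := Summable.sum_add_tsum_nat_add N hsummable
  -- head bound
  have hhead : (∑ i ∈ Finset.range N, ‖dterm s i‖) ≤ ((harmonic N : ℚ) : ℝ) := by
    rw [harmonic_cast]
    exact Finset.sum_le_sum fun i _ => b1 i
  -- tail bound
  have htel := telescope_hasSum hN1
  have htail : (∑' n, ‖dterm s (n + N)‖) ≤ 1 := by
    have hterm : ∀ n : ℕ, ‖dterm s (n + N)‖ ≤ r * (1/((n:ℝ) + N) - 1/((n:ℝ) + N + 1)) := by
      intro n
      refine (b2 (n + N)).trans ?_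
      have hm : (0:ℝ) < (n:ℝ) + N := by positivity
      have key : 1/(((n + N : ℕ):ℝ)+1)^2 ≤ 1/((n:ℝ) + N) - 1/((n:ℝ) + N + 1) := by
        rw [show (((n + N : ℕ)):ℝ) = (n:ℝ) + (N:ℝ) by push_cast; ring]
        rw [div_sub_div _ _ hm.ne' (by positivity : ((n:ℝ) + N + 1) ≠ 0)]
        rw [div_le_div_iff₀ (by positivity) (by positivity)]
        nlinarith
      calc r * (1/(((n + N : ℕ):ℝ)+1)^2) ≤ r * (1/((n:ℝ) + N) - 1/((n:ℝ) + N + 1)) :=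
            mul_le_mul_of_nonneg_left key hr0
        _ = _ := rfl
    have hsum2 : Summable (fun n : ℕ => ‖dterm s (n + N)‖) :=
      (summable_nat_add_iff N).mpr hsummable
    calc (∑' n, ‖dterm s (n + N)‖)
        ≤ ∑' (n : ℕ), r * (1/((n:ℝ) + N) - 1/((n:ℝ) + N + 1)) :=
          hsum2.tsum_le_tsum hterm (htel.mul_left r).summable
      _ = r * (1/(N:ℝ)) := (htel.mul_left r).tsum_eq
      _ ≤ 1 := by
          rw [mul_one_div, div_le_one hNpos]
          exact hrN
  -- assemble
  have htsum_norm : (∑' n, ‖dterm s n‖) ≤ ((harmonic N : ℚ) : ℝ) + 1 := by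
    rw [← hsplit]
    exact add_le_add hhead htail
  have hFC : ‖FC s‖ ≤ γ + (∑' n, ‖dterm s n‖) := by
    unfold FC
    refine (norm_add_le _ _).trans ?_
    have h1 : ‖-(γ:ℂ)‖ = γ := by
      rw [norm_neg, Complex.norm_real, Real.norm_eq_abs]
      exact _root_.abs_of_nonneg
        (by linarith [Real.one_half_lt_eulerMascheroniConstant])
    rw [h1]
    exact add_le_add_right (norm_tsum_le_tsum_norm hsummable) _
  have hharm := harmonic_le_one_add_log N
  -- log chain
  have hlog1 : Real.log N ≤ Real.log (r + 1) :=
    Real.log_le_log hNpos hNr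
  have hlog2 : Real.log (r + 1) ≤ Real.log (‖s‖ + 2) := by
    apply Real.log_le_log (by linarith)
    have : r ≤ ‖s‖ + 1 := by
      rw [hr]
      refine (norm_sub_le s 1).trans ?_
      simp
    linarith
  have hlog3 : Real.log (‖s‖ + 2) ≤ Real.log 2 + Real.log (‖s‖ + 1) := by
    rw [← Real.log_mul (by norm_num) (by positivity)]
    apply Real.log_le_log (by positivity)
    have : (0:ℝ) ≤ ‖s‖ := norm_nonneg s
    linarith
  have hγ := Real.eulerMascheroniConstant_lt_two_thirds
  have hlog2' := Real.log_two_lt_d9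
  calc ‖FC s‖ ≤ γ + (∑' n, ‖dterm s n‖) := hFC
    _ ≤ γ + (((harmonic N : ℚ) : ℝ) + 1) := by linarith
    _ ≤ γ + ((1 + Real.log N) + 1) := by linarith
    _ ≤ 11/3 + Real.log (‖s‖ + 1) := by linarith
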